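/- Let R be a commutative ℚ-algebra and let x_1,…,x_n, t ∈ R. In the formal power series ring R[[z_1,…,z_n]] one has exp( Σ_{q≥1} (1 + (−1)^{q+1} t^q)/q · (Σ_{j=1}^n x_j^q) · (Σ_{i=1}^n z_i^q) ) = Π_{1≤i,j≤n} (1 + t·z_i·x_j) · (1 − z_i·x_j)^{−1}, where the exponential is taken of the formal power series with zero constant term Σ_{q≥1} s_q(t)·(Σ_i z_i^q), s_q(t) := (1+(−1)^{q+1}t^q)/q · Σ_{j=1}^n x_j^q. (Lemma 'sumtheseries'.) -/

import Mathlib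

/-- The geometric series `∑_{m ≥ 0} a^m z_i^m = (1 - a z_i)⁻¹` in `R[[z_1, …, z_n]]`. -/
noncomputable def geom {R : Type*} [CommRing R] {n : ℕ} (a : R) (i : Fin n) :
    MvPowerSeries (Fin n) R :=
  fun d => if d = Finsupp.single i (d i) then a ^ (d i) else 0

/-- The total degree `|d|` of an exponent `d`. -/
def expDeg {n : ℕ} (d : Fin n →₀ ℕ) : ℕ := d.sum fun _ m => m

/-- The formal power series `∑_{q ≥ 1} s_q(t) ⬝ (∑_i z_i^q)` with
`s_q(t) = (1 + (-1)^{q+1} t^q)/q ⬝ ∑_j x_j^q`: its only nonzero coefficients are at the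
monomials `z_i^q` (`q ≥ 1`), i.e. at exponents `d` supported at a single index, where the
coefficient is `s_{|d|}(t)`. -/
noncomputable def hamSeries {R : Type*} [CommRing R] [Algebra ℚ R] {n : ℕ}
    (x : Fin n → R) (t : R) : MvPowerSeries (Fin n) R :=
  fun d =>
    if d.support.card = 1 then
      ((expDeg d : ℚ))⁻¹ •
        ((1 + (-1 : R) ^ (expDeg d + 1) * t ^ expDeg d) * ∑ j, x j ^ expDeg d)
    else 0

/-- The exponential of a formal power series with zero constant term, defined by its
exponential series `∑_{k ≥ 0} F^k / k!`: since `F` has zero constant term, only the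
terms with `k ≤ |d|` contribute to the coefficient at `d`. -/
noncomputable def expPS {R : Type*} [CommRing R] [Algebra ℚ R] {n : ℕ}
    (F : MvPowerSeries (Fin n) R) : MvPowerSeries (Fin n) R :=
  fun d => ∑ k ∈ Finset.range (expDeg d + 1),
    ((k.factorial : ℚ))⁻¹ • MvPowerSeries.coeff d (F ^ k)

/-! ### Auxiliary lemmas -/

set_option linter.unusedSectionVars false

section DegLemmas
variable {R : Type*} [CommRing R] {n : ℕ}

lemma expDeg_add (a b : Fin n →₀ ℕ) : expDeg (a + b) = expDeg a + expDeg b :=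
  Finsupp.sum_add_index' (fun _ => rfl) (fun _ _ _ => rfl)

lemma expDeg_single (i : Fin n) (m : ℕ) : expDeg (Finsupp.single i m) = m :=
  Finsupp.sum_single_index rfl

lemma expDeg_eq_zero {d : Fin n →₀ ℕ} (h : expDeg d = 0) : d = 0 := by
  ext i
  by_contra hi
  have hmem : i ∈ d.support := Finsupp.mem_support_iff.mpr (by simpa using hi)
  have : d i ≤ expDeg d := Finset.single_le_sum (f := fun j => d j) (fun _ _ => Nat.zero_le _) hmem
  simp only [Finsupp.coe_zero, Pi.zero_apply] at hi
  omega

lemma coeff_pow_eq_zero {F : MvPowerSeries (Fin n) R}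
    (hF : MvPowerSeries.constantCoeff F = 0) :
    ∀ (k : ℕ) (d : Fin n →₀ ℕ), expDeg d < k → MvPowerSeries.coeff d (F ^ k) = 0 := by
  intro k
  induction k with
  | zero => intro d h; omega
  | succ k ih =>
    intro d hd
    rw [pow_succ, MvPowerSeries.coeff_mul]
    apply Finset.sum_eq_zero
    rintro ⟨p1, p2⟩ hp
    rw [Finset.HasAntidiagonal.mem_antidiagonal] at hp
    have hsum : expDeg p1 + expDeg p2 = expDeg d := by rw [← expDeg_add, hp]
    by_cases h1 : expDeg p1 < k
    · rw [ih p1 h1, zero_mul]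
    · have h2 : expDeg p2 = 0 := by omega
      have : p2 = 0 := expDeg_eq_zero h2
      subst this
      rw [MvPowerSeries.coeff_zero_eq_constantCoeff, hF, mul_zero]

lemma coeff_mul_pow_eq_zero {F G : MvPowerSeries (Fin n) R}
    (hF : MvPowerSeries.constantCoeff F = 0)
    (hG : MvPowerSeries.constantCoeff G = 0)
    {j m : ℕ} {d : Fin n →₀ ℕ} (h : expDeg d < j + m) :
    MvPowerSeries.coeff d (F ^ j * G ^ m) = 0 := by
  rw [MvPowerSeries.coeff_mul]
  apply Finset.sum_eq_zero
  rintro ⟨p1, p2⟩ hp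
  rw [Finset.HasAntidiagonal.mem_antidiagonal] at hp
  have hsum : expDeg p1 + expDeg p2 = expDeg d := by rw [← expDeg_add, hp]
  by_cases h1 : expDeg p1 < j
  · rw [coeff_pow_eq_zero hF j p1 h1, zero_mul]
  · have h2 : expDeg p2 < m := by omega
    rw [coeff_pow_eq_zero hG m p2 h2, mul_zero]

lemma sum_tri {M : Type*} [AddCommMonoid M] (N : ℕ) (f : ℕ → ℕ → M)
    (hf : ∀ j m, N < j + m → f j m = 0) :
    ∑ k ∈ Finset.range (N + 1), ∑ j ∈ Finset.range (k + 1), f j (k - j)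
      = ∑ j ∈ Finset.range (N + 1), ∑ m ∈ Finset.range (N + 1), f j m := by
  have h1 : ∀ k ∈ Finset.range (N + 1), ∑ j ∈ Finset.range (k + 1), f j (k - j)
      = ∑ p ∈ Finset.HasAntidiagonal.antidiagonal k, f p.1 p.2 :=
    fun k _ => by simpa using (Finset.Nat.sum_antidiagonal_eq_sum_range_succ_mk
      (fun p => f p.1 p.2) k).symm
  rw [Finset.sum_congr rfl h1, ← Finset.sum_biUnion]
  · rw [← Finset.sum_product']
    apply Finset.sum_subset
    · intro p hp
      simp only [Finset.mem_biUnion, Finset.mem_range, Finset.HasAntidiagonal.mem_antidiagonal] at hp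
      obtain ⟨k, hk, hpk⟩ := hp
      simp only [Finset.mem_product, Finset.mem_range]
      omega
    · intro p hp hnp
      simp only [Finset.mem_product, Finset.mem_range] at hp
      simp only [Finset.mem_biUnion, Finset.mem_range, Finset.HasAntidiagonal.mem_antidiagonal] at hnp
      apply hf
      by_contra hc
      exact hnp ⟨p.1 + p.2, by omega, rfl⟩
  · intro a _ b _ hab
    simp only [Function.onFun]
    rw [Finset.disjoint_left]
    intro p hpa hpb
    rw [Finset.HasAntidiagonal.mem_antidiagonal] at hpa hpb
    omega

end DegLemmas

section ExpAdd
variable {R : Type*} [CommRing R] [Algebra ℚ R] {n : ℕ}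

lemma coeff_expPS (F : MvPowerSeries (Fin n) R) (d : Fin n →₀ ℕ) :
    MvPowerSeries.coeff d (expPS F)
      = ∑ k ∈ Finset.range (expDeg d + 1),
          ((k.factorial : ℚ))⁻¹ • MvPowerSeries.coeff d (F ^ k) := rfl

lemma expPS_add {F G : MvPowerSeries (Fin n) R}
    (hF : MvPowerSeries.constantCoeff F = 0)
    (hG : MvPowerSeries.constantCoeff G = 0) :
    expPS (F + G) = expPS F * expPS G := by
  apply MvPowerSeries.ext
  intro d
  set N := expDeg d with hN
  have key1 : MvPowerSeries.coeff d (expPS (F + G))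
      = ∑ k ∈ Finset.range (N + 1), ∑ j ∈ Finset.range (k + 1),
          (((j.factorial : ℚ))⁻¹ * (((k - j).factorial : ℚ))⁻¹) •
            MvPowerSeries.coeff d (F ^ j * G ^ (k - j)) := by
    rw [coeff_expPS]
    apply Finset.sum_congr rfl
    intro k _
    rw [add_pow, map_sum, Finset.smul_sum]
    apply Finset.sum_congr rfl
    intro j hj
    rw [Finset.mem_range] at hj
    have hjk : j ≤ k := by omega
    have h0 : F ^ j * G ^ (k - j) * (k.choose j : MvPowerSeries (Fin n) R)
        = (k.choose j) • (F ^ j * G ^ (k - j)) := by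
      rw [nsmul_eq_mul, mul_comm]
    rw [h0, map_nsmul, ← Nat.cast_smul_eq_nsmul ℚ, smul_smul]
    congr 1
    rw [Nat.cast_choose ℚ hjk]
    have h1 : (j.factorial : ℚ) ≠ 0 := Nat.cast_ne_zero.mpr (Nat.factorial_ne_zero _)
    have h2 : (((k - j).factorial : ℚ)) ≠ 0 := Nat.cast_ne_zero.mpr (Nat.factorial_ne_zero _)
    have h3 : ((k.factorial : ℚ)) ≠ 0 := Nat.cast_ne_zero.mpr (Nat.factorial_ne_zero _)
    field_simp
  have key2 : MvPowerSeries.coeff d (expPS F * expPS G)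
      = ∑ j ∈ Finset.range (N + 1), ∑ m ∈ Finset.range (N + 1),
          (((j.factorial : ℚ))⁻¹ * ((m.factorial : ℚ))⁻¹) •
            MvPowerSeries.coeff d (F ^ j * G ^ m) := by
    rw [MvPowerSeries.coeff_mul]
    have step1 : ∀ p ∈ Finset.HasAntidiagonal.antidiagonal d,
        MvPowerSeries.coeff p.1 (expPS F) * MvPowerSeries.coeff p.2 (expPS G)
          = ∑ j ∈ Finset.range (N + 1), ∑ m ∈ Finset.range (N + 1),
              (((j.factorial : ℚ))⁻¹ * ((m.factorial : ℚ))⁻¹) •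
                (MvPowerSeries.coeff p.1 (F ^ j) * MvPowerSeries.coeff p.2 (G ^ m)) := by
      intro p hp
      rw [Finset.HasAntidiagonal.mem_antidiagonal] at hp
      have h1 : expDeg p.1 ≤ N := by rw [hN, ← hp, expDeg_add]; omega
      have h2 : expDeg p.2 ≤ N := by rw [hN, ← hp, expDeg_add]; omega
      rw [coeff_expPS, coeff_expPS,
        Finset.sum_subset (Finset.range_subset_range.mpr (by omega : expDeg p.1 + 1 ≤ N + 1))
          (fun k _ hk => by
            rw [coeff_pow_eq_zero hF k p.1 (by rw [Finset.mem_range] at hk; omega), smul_zero]),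
        Finset.sum_subset (Finset.range_subset_range.mpr (by omega : expDeg p.2 + 1 ≤ N + 1))
          (fun k _ hk => by
            rw [coeff_pow_eq_zero hG k p.2 (by rw [Finset.mem_range] at hk; omega), smul_zero]),
        Finset.sum_mul_sum]
      apply Finset.sum_congr rfl
      intro j _
      apply Finset.sum_congr rfl
      intro m _
      rw [smul_mul_smul_comm]
    rw [Finset.sum_congr rfl step1, Finset.sum_comm]
    apply Finset.sum_congr rfl
    intro j _
    rw [Finset.sum_comm]
    apply Finset.sum_congr rfl
    intro m _
    rw [← Finset.smul_sum, ← MvPowerSeries.coeff_mul]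
  rw [key1, key2]
  exact sum_tri N
    (fun j m => (((j.factorial : ℚ))⁻¹ * ((m.factorial : ℚ))⁻¹) •
      MvPowerSeries.coeff d (F ^ j * G ^ m))
    (fun j m h => by
      beta_reduce
      rw [coeff_mul_pow_eq_zero hF hG (show expDeg d < j + m by omega), smul_zero])

lemma expPS_zero : expPS (0 : MvPowerSeries (Fin n) R) = 1 := by
  apply MvPowerSeries.ext
  intro d
  rw [coeff_expPS, Finset.sum_eq_single 0]
  · simp
  · intro k _ hk
    rw [zero_pow hk, map_zero, smul_zero]
  · intro h
    exact absurd (Finset.mem_range.mpr (by omega)) h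

lemma expPS_sum {ι : Type*} (s : Finset ι) (F : ι → MvPowerSeries (Fin n) R)
    (h : ∀ a ∈ s, MvPowerSeries.constantCoeff (F a) = 0) :
    expPS (∑ a ∈ s, F a) = ∏ a ∈ s, expPS (F a) := by
  induction s using Finset.cons_induction with
  | empty => simpa using expPS_zero
  | cons a s ha ih =>
    rw [Finset.sum_cons, Finset.prod_cons,
      expPS_add (h a (Finset.mem_cons_self a s))
        (by rw [map_sum]
            exact Finset.sum_eq_zero fun b hb => h b (Finset.mem_cons_of_mem hb)),
      ih (fun b hb => h b (Finset.mem_cons_of_mem hb))]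

end ExpAdd

section Univariate
open PowerSeries
variable {R : Type*} [CommRing R] [Algebra ℚ R]

noncomputable def uexp (f : R⟦X⟧) : R⟦X⟧ :=
  PowerSeries.mk fun m =>
    ∑ k ∈ Finset.range (m + 1), ((k.factorial : ℚ))⁻¹ • PowerSeries.coeff m (f ^ k)

lemma coeff_uexp (f : R⟦X⟧) (m : ℕ) :
    coeff m (uexp f)
      = ∑ k ∈ Finset.range (m + 1), ((k.factorial : ℚ))⁻¹ • coeff m (f ^ k) :=
  coeff_mk _ _

lemma constantCoeff_uexp (f : R⟦X⟧) : constantCoeff (uexp f) = 1 := by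
  rw [← coeff_zero_eq_constantCoeff, coeff_uexp]
  simp

lemma ucoeff_pow_eq_zero {f : R⟦X⟧} (hf : constantCoeff f = 0) :
    ∀ (k m : ℕ), m < k → coeff m (f ^ k) = 0 := by
  intro k
  induction k with
  | zero => intro m hm; omega
  | succ k ih =>
    intro m hm
    rw [pow_succ, coeff_mul]
    apply Finset.sum_eq_zero
    rintro ⟨p1, p2⟩ hp
    rw [Finset.HasAntidiagonal.mem_antidiagonal] at hp
    simp only at hp ⊢
    by_cases h1 : p1 < k
    · rw [ih p1 h1, zero_mul]
    · have h2 : p2 = 0 := by omega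
      subst h2
      rw [coeff_zero_eq_constantCoeff, hf, mul_zero]

lemma deriv_uexp {f : R⟦X⟧} (hf : constantCoeff f = 0) :
    d⁄dX R (uexp f) = d⁄dX R f * uexp f := by
  ext m
  have lhs : coeff m (d⁄dX R (uexp f))
      = ∑ k ∈ Finset.range (m + 1),
          ((k.factorial : ℚ))⁻¹ • coeff m (d⁄dX R f * f ^ k) := by
    rw [coeff_derivative, coeff_uexp, Finset.sum_mul]
    have step : ∀ k ∈ Finset.range (m + 2),
        (((k.factorial : ℚ))⁻¹ • coeff (m + 1) (f ^ k)) * ((m : R) + 1)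
          = ((k.factorial : ℚ))⁻¹ • (k • coeff m (f ^ (k - 1) * d⁄dX R f)) := by
      intro k _
      rw [smul_mul_assoc, ← coeff_derivative, Derivation.leibniz_pow, smul_eq_mul, map_nsmul]
    rw [Finset.sum_congr rfl step, Finset.sum_range_succ']
    simp only [zero_smul, smul_zero, add_zero, Nat.succ_sub_one]
    apply Finset.sum_congr rfl
    intro j _
    rw [← Nat.cast_smul_eq_nsmul ℚ, smul_smul]
    rw [mul_comm (f ^ j) (d⁄dX R f)]
    congr 1
    rw [Nat.factorial_succ]
    have h1 : (j.factorial : ℚ) ≠ 0 := Nat.cast_ne_zero.mpr (Nat.factorial_ne_zero _)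
    push_cast
    field_simp
  have rhs : coeff m (d⁄dX R f * uexp f)
      = ∑ k ∈ Finset.range (m + 1),
          ((k.factorial : ℚ))⁻¹ • coeff m (d⁄dX R f * f ^ k) := by
    rw [coeff_mul]
    have step : ∀ p ∈ Finset.HasAntidiagonal.antidiagonal m,
        coeff p.1 (d⁄dX R f) * coeff p.2 (uexp f)
          = ∑ k ∈ Finset.range (m + 1),
              ((k.factorial : ℚ))⁻¹ • (coeff p.1 (d⁄dX R f) * coeff p.2 (f ^ k)) := by
      intro p hp
      rw [Finset.HasAntidiagonal.mem_antidiagonal] at hp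
      have hp2 : p.2 ≤ m := by omega
      rw [coeff_uexp,
        Finset.sum_subset (Finset.range_subset_range.mpr (by omega : p.2 + 1 ≤ m + 1))
          (fun k _ hk => by
            rw [ucoeff_pow_eq_zero hf k p.2 (by rw [Finset.mem_range] at hk; omega), smul_zero]),
        Finset.mul_sum]
      apply Finset.sum_congr rfl
      intro k _
      rw [mul_smul_comm]
    rw [Finset.sum_congr rfl step, Finset.sum_comm]
    apply Finset.sum_congr rfl
    intro k _
    rw [← Finset.smul_sum, ← coeff_mul]
  rw [lhs, rhs]

lemma ode_unique {h u v : R⟦X⟧} (hu : d⁄dX R u = h * u) (hv : d⁄dX R v = h * v)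
    (h0 : constantCoeff u = constantCoeff v) : u = v := by
  ext m
  induction m using Nat.strong_induction_on with
  | _ m ih =>
    match m with
    | 0 => simpa using h0
    | (m + 1) =>
      have key : coeff (m + 1) u * ((m : R) + 1) = coeff (m + 1) v * ((m : R) + 1) := by
        rw [← coeff_derivative, ← coeff_derivative, hu, hv, coeff_mul, coeff_mul]
        apply Finset.sum_congr rfl
        rintro ⟨p1, p2⟩ hp
        rw [Finset.HasAntidiagonal.mem_antidiagonal] at hp
        simp only at hp ⊢
        rw [ih p2 (by omega)]
      have hcast : (algebraMap ℚ R) ((m : ℚ) + 1) = (m : R) + 1 := by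
        rw [map_add, map_one, map_natCast]
      have hq : ((m : ℚ) + 1) ≠ 0 := by positivity
      have e : ((m : ℚ) + 1) • coeff (m + 1) u = ((m : ℚ) + 1) • coeff (m + 1) v := by
        rw [Algebra.smul_def, Algebra.smul_def, hcast, mul_comm, mul_comm ((m : R) + 1)]
        exact key
      have := congrArg (fun y => ((m : ℚ) + 1)⁻¹ • y) e
      simpa [smul_smul, inv_mul_cancel₀ hq] using this

noncomputable def Lser (a : R) : R⟦X⟧ := PowerSeries.mk fun q => ((q : ℚ))⁻¹ • a ^ q

noncomputable def Mser (b : R) : R⟦X⟧ :=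
  PowerSeries.mk fun q => ((q : ℚ))⁻¹ • ((-1 : R) ^ (q + 1) * b ^ q)

noncomputable def geomU (a : R) : R⟦X⟧ := PowerSeries.mk fun q => a ^ q

lemma constantCoeff_Lser (a : R) : constantCoeff (Lser a) = 0 := by
  rw [← coeff_zero_eq_constantCoeff]; simp [Lser]

lemma constantCoeff_Mser (b : R) : constantCoeff (Mser b) = 0 := by
  rw [← coeff_zero_eq_constantCoeff]; simp [Mser]

lemma smul_cancel (m : ℕ) (x : R) : (((m : ℚ) + 1))⁻¹ • x * ((m : R) + 1) = x := by
  have hcast : (algebraMap ℚ R) ((m : ℚ) + 1) = (m : R) + 1 := by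
    rw [map_add, map_one, map_natCast]
  have hq : ((m : ℚ) + 1) ≠ 0 := by positivity
  rw [smul_mul_assoc, ← hcast, ← Algebra.commutes, ← Algebra.smul_def, smul_smul,
    inv_mul_cancel₀ hq, one_smul]

lemma deriv_Lser (a : R) : d⁄dX R (Lser a) = C a * geomU a := by
  ext m
  rw [coeff_derivative, coeff_C_mul]
  simp only [Lser, geomU, coeff_mk]
  push_cast
  rw [smul_cancel m (a ^ (m + 1)), pow_succ']

lemma deriv_geomU (a : R) : d⁄dX R (geomU a) = (C a * geomU a) * geomU a := by
  ext m
  rw [coeff_derivative, mul_assoc, coeff_C_mul, coeff_mul]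
  simp only [geomU, coeff_mk]
  have step : ∀ p ∈ Finset.HasAntidiagonal.antidiagonal m, a ^ p.1 * a ^ p.2 = a ^ m := by
    rintro ⟨p1, p2⟩ hp
    rw [Finset.HasAntidiagonal.mem_antidiagonal] at hp
    simp only at hp ⊢
    rw [← pow_add, hp]
  rw [Finset.sum_congr rfl step, Finset.sum_const, Finset.Nat.card_antidiagonal, nsmul_eq_mul]
  push_cast
  ring

lemma uexp_Lser (a : R) : uexp (Lser a) = geomU a := by
  apply ode_unique (h := C a * geomU a)
  · rw [deriv_uexp (constantCoeff_Lser a), deriv_Lser]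
  · exact deriv_geomU a
  · rw [constantCoeff_uexp, ← coeff_zero_eq_constantCoeff]
    simp [geomU]

lemma coeff_deriv_Mser (b : R) (m : ℕ) :
    coeff m (d⁄dX R (Mser b)) = (-1 : R) ^ m * b ^ (m + 1) := by
  rw [coeff_derivative]
  simp only [Mser, coeff_mk]
  push_cast
  rw [smul_cancel m ((-1 : R) ^ (m + 1 + 1) * b ^ (m + 1))]
  ring

lemma deriv_onePlus (b : R) :
    d⁄dX R (1 + C b * X) = d⁄dX R (Mser b) * (1 + C b * X) := by
  have hD : d⁄dX R ((1 : R⟦X⟧) + C b * X) = C b := by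
    simp [Derivation.leibniz, smul_eq_mul]
  rw [hD]
  have hre : d⁄dX R (Mser b) * (C b * X) = (C b * d⁄dX R (Mser b)) * X := by ring
  ext m
  rw [mul_add, mul_one, hre, map_add]
  cases m with
  | zero =>
    rw [coeff_zero_mul_X, coeff_deriv_Mser]
    simp
  | succ m =>
    rw [coeff_succ_mul_X, coeff_C_mul, coeff_deriv_Mser, coeff_deriv_Mser, coeff_C,
      if_neg (Nat.succ_ne_zero m)]
    ring

lemma uexp_Mser (b : R) : uexp (Mser b) = 1 + C b * X := by
  apply ode_unique (h := d⁄dX R (Mser b))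
  · exact deriv_uexp (constantCoeff_Mser b)
  · exact deriv_onePlus b
  · rw [constantCoeff_uexp]
    simp

end Univariate

section Emb
variable {R : Type*} [CommRing R] {n : ℕ}

noncomputable def embFun (i : Fin n) (f : PowerSeries R) : MvPowerSeries (Fin n) R :=
  fun d => if d = Finsupp.single i (d i) then PowerSeries.coeff (d i) f else 0

lemma coeff_embFun (i : Fin n) (f : PowerSeries R) (d : Fin n →₀ ℕ) :
    MvPowerSeries.coeff d (embFun i f)
      = if d = Finsupp.single i (d i) then PowerSeries.coeff (d i) f else 0 := rfl

lemma embFun_one (i : Fin n) : embFun i (1 : PowerSeries R) = 1 := by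
  apply MvPowerSeries.ext
  intro d
  rw [coeff_embFun, MvPowerSeries.coeff_one]
  by_cases hd : d = Finsupp.single i (d i)
  · rw [if_pos hd, PowerSeries.coeff_one]
    by_cases h0 : d i = 0
    · rw [if_pos h0, if_pos (by rw [hd, h0, Finsupp.single_zero])]
    · rw [if_neg h0, if_neg (fun h => h0 (by rw [h]; rfl))]
  · rw [if_neg hd, if_neg (fun h => hd (by rw [h]; simp))]

lemma embFun_add (i : Fin n) (f g : PowerSeries R) :
    embFun i (f + g) = embFun i f + embFun i g := by
  apply MvPowerSeries.ext
  intro d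
  rw [map_add, coeff_embFun, coeff_embFun, coeff_embFun]
  by_cases hd : d = Finsupp.single i (d i)
  · rw [if_pos hd, if_pos hd, if_pos hd, map_add]
  · rw [if_neg hd, if_neg hd, if_neg hd, add_zero]

lemma embFun_mul (i : Fin n) (f g : PowerSeries R) :
    embFun i (f * g) = embFun i f * embFun i g := by
  apply MvPowerSeries.ext
  intro d
  rw [coeff_embFun, MvPowerSeries.coeff_mul]
  by_cases hd : d = Finsupp.single i (d i)
  · rw [if_pos hd, PowerSeries.coeff_mul]
    conv_rhs => rw [hd]
    rw [Finsupp.antidiagonal_single, Finset.sum_map]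
    apply Finset.sum_congr rfl
    rintro ⟨p1, p2⟩ hp
    simp [coeff_embFun, Finsupp.single_eq_same]
  · rw [if_neg hd]
    symm
    apply Finset.sum_eq_zero
    rintro ⟨p1, p2⟩ hp
    rw [Finset.HasAntidiagonal.mem_antidiagonal] at hp
    rw [coeff_embFun, coeff_embFun]
    simp only
    by_cases h1 : p1 = Finsupp.single i (p1 i)
    · by_cases h2 : p2 = Finsupp.single i (p2 i)
      · exfalso
        apply hd
        have hsum : d = Finsupp.single i (p1 i + p2 i) := by
          rw [← hp, Finsupp.single_add]
          exact congrArg₂ (· + ·) h1 h2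
        have hdi : d i = p1 i + p2 i := by rw [hsum, Finsupp.single_eq_same]
        rw [hdi]
        exact hsum
      · rw [if_neg h2, mul_zero]
    · rw [if_neg h1, zero_mul]

/-- The ring embedding `R⟦X⟧ → R[[z_1,…,z_n]]`, `X ↦ z_i`. -/
noncomputable def emb (i : Fin n) : PowerSeries R →+* MvPowerSeries (Fin n) R where
  toFun := embFun i
  map_zero' := by apply MvPowerSeries.ext; intro d; rw [coeff_embFun]; simp
  map_one' := embFun_one i
  map_add' := embFun_add i
  map_mul' := embFun_mul i

lemma coeff_emb (i : Fin n) (f : PowerSeries R) (d : Fin n →₀ ℕ) :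
    MvPowerSeries.coeff d (emb i f)
      = if d = Finsupp.single i (d i) then PowerSeries.coeff (d i) f else 0 := rfl

lemma constantCoeff_emb (i : Fin n) (f : PowerSeries R) :
    MvPowerSeries.constantCoeff (emb i f) = PowerSeries.constantCoeff f := by
  rw [← MvPowerSeries.coeff_zero_eq_constantCoeff, coeff_emb, if_pos (by simp)]
  simp [PowerSeries.coeff_zero_eq_constantCoeff]

lemma emb_C (i : Fin n) (b : R) : emb i (PowerSeries.C b) = MvPowerSeries.C (σ := Fin n) (R := R) b := by
  apply MvPowerSeries.ext
  intro d
  rw [coeff_emb, MvPowerSeries.coeff_C]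
  by_cases hd : d = Finsupp.single i (d i)
  · rw [if_pos hd, PowerSeries.coeff_C]
    by_cases h0 : d i = 0
    · rw [if_pos h0, if_pos (by rw [hd, h0, Finsupp.single_zero])]
    · rw [if_neg h0, if_neg (fun h => h0 (by rw [h]; rfl))]
  · rw [if_neg hd, if_neg (fun h => hd (by rw [h]; simp))]

lemma emb_X (i : Fin n) : emb i (PowerSeries.X : PowerSeries R) = MvPowerSeries.X i := by
  apply MvPowerSeries.ext
  intro d
  rw [coeff_emb, MvPowerSeries.coeff_X]
  by_cases hd : d = Finsupp.single i (d i)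
  · rw [if_pos hd, PowerSeries.coeff_X]
    by_cases h1 : d i = 1
    · rw [if_pos h1, if_pos (by rw [hd, h1])]
    · rw [if_neg h1, if_neg (fun h => h1 (by rw [h, Finsupp.single_eq_same]))]
  · rw [if_neg hd, if_neg (fun h => hd (by rw [h, Finsupp.single_eq_same]))]

lemma emb_geomU (i : Fin n) (a : R) : emb i (geomU a) = geom a i := by
  funext d
  show embFun i (geomU a) d = _
  unfold embFun geom
  by_cases hd : d = Finsupp.single i (d i)
  · rw [if_pos hd, if_pos hd, geomU, PowerSeries.coeff_mk]
  · rw [if_neg hd, if_neg hd]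

end Emb

section Assemble
variable {R : Type*} [CommRing R] [Algebra ℚ R] {n : ℕ}

lemma expPS_emb (i : Fin n) (f : PowerSeries R) : expPS (emb i f) = emb i (uexp f) := by
  apply MvPowerSeries.ext
  intro d
  rw [coeff_expPS, coeff_emb]
  have hpow : ∀ k : ℕ, MvPowerSeries.coeff d ((emb i f) ^ k)
      = if d = Finsupp.single i (d i) then PowerSeries.coeff (d i) (f ^ k) else 0 :=
    fun k => by rw [← map_pow, coeff_emb]
  by_cases hd : d = Finsupp.single i (d i)
  · have hdeg : expDeg d = d i := by
      conv_lhs => rw [hd]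
      rw [expDeg_single]
    rw [if_pos hd, coeff_uexp]
    simp only [hpow, if_pos hd, hdeg]
  · rw [if_neg hd]
    apply Finset.sum_eq_zero
    intro k _
    rw [hpow, if_neg hd, smul_zero]

lemma ham_eq (x : Fin n → R) (t : R) :
    hamSeries x t
      = ∑ p : Fin n × Fin n, (emb p.1 (Mser (t * x p.2)) + emb p.1 (Lser (x p.2))) := by
  apply MvPowerSeries.ext
  intro d
  rw [map_sum]
  have hco : MvPowerSeries.coeff d (hamSeries x t)
      = if d.support.card = 1 then
          ((expDeg d : ℚ))⁻¹ •
            ((1 + (-1 : R) ^ (expDeg d + 1) * t ^ expDeg d) * ∑ j, x j ^ expDeg d)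
        else 0 := rfl
  rw [hco]
  by_cases h1 : d.support.card = 1
  · rw [if_pos h1]
    obtain ⟨i, m, hm, rfl⟩ := Finsupp.card_support_eq_one'.mp h1
    rw [expDeg_single]
    have hzero : ∀ i' ∈ (Finset.univ : Finset (Fin n)), i' ≠ i →
        (∑ j : Fin n, MvPowerSeries.coeff (Finsupp.single i m)
          (emb i' (Mser (t * x j)) + emb i' (Lser (x j)))) = 0 := by
      intro i' _ hne
      apply Finset.sum_eq_zero
      intro j _
      have hcond : ¬(Finsupp.single i m = Finsupp.single i' ((Finsupp.single i m) i')) := by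
        rw [Finsupp.single_eq_of_ne hne, Finsupp.single_zero]
        exact fun h => hm (Finsupp.single_eq_zero.mp h)
      rw [map_add, coeff_emb, coeff_emb, if_neg hcond, if_neg hcond, add_zero]
    conv_rhs => rw [Fintype.sum_prod_type, Finset.sum_eq_single i hzero
      (fun hni => absurd (Finset.mem_univ i) hni)]
    have hcond : Finsupp.single i m = Finsupp.single i ((Finsupp.single i m) i) := by
      rw [Finsupp.single_eq_same]
    have hsi : (Finsupp.single i m) i = m := Finsupp.single_eq_same
    calc ((m : ℚ))⁻¹ • ((1 + (-1 : R) ^ (m + 1) * t ^ m) * ∑ j, x j ^ m)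
        = ∑ j, ((m : ℚ))⁻¹ • ((1 + (-1 : R) ^ (m + 1) * t ^ m) * x j ^ m) := by
          rw [Finset.mul_sum, Finset.smul_sum]
      _ = ∑ j, (MvPowerSeries.coeff (Finsupp.single i m)
              (emb i (Mser (t * x j)) + emb i (Lser (x j)))) := by
          apply Finset.sum_congr rfl
          intro j _
          rw [map_add, coeff_emb, coeff_emb, if_pos hcond, if_pos hcond, hsi]
          simp only [Mser, Lser, PowerSeries.coeff_mk]
          rw [← smul_add]
          congr 1
          rw [mul_pow]
          ring
  · rw [if_neg h1]
    symm
    apply Finset.sum_eq_zero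
    rintro ⟨i, j⟩ _
    rw [map_add, coeff_emb, coeff_emb]
    simp only
    by_cases hd : d = Finsupp.single i (d i)
    · have h0 : d i = 0 := by
        by_contra hne
        apply h1
        rw [hd, Finsupp.support_single_ne_zero _ hne, Finset.card_singleton]
      rw [if_pos hd, if_pos hd, h0]
      simp [Mser, Lser]
    · rw [if_neg hd, if_neg hd, add_zero]

end Assemble

/-- Lemma `sumtheseries`. -/
theorem stmt6 {R : Type*} [CommRing R] [Algebra ℚ R] (n : ℕ) (x : Fin n → R) (t : R) :
    expPS (hamSeries x t)
      = ∏ i : Fin n, ∏ j : Fin n,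
          (1 + MvPowerSeries.C (σ := Fin n) (R := R) (t * x j) * MvPowerSeries.X i) * geom (x j) i := by
  rw [ham_eq x t,
    expPS_sum Finset.univ _ (fun p _ => by
      rw [map_add, constantCoeff_emb, constantCoeff_emb, constantCoeff_Mser,
        constantCoeff_Lser, add_zero]),
    Fintype.prod_prod_type]
  apply Finset.prod_congr rfl
  intro i _
  apply Finset.prod_congr rfl
  intro j _
  rw [expPS_add (by rw [constantCoeff_emb, constantCoeff_Mser])
      (by rw [constantCoeff_emb, constantCoeff_Lser]),
    expPS_emb, expPS_emb, uexp_Mser, uexp_Lser, emb_geomU,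
    map_add, map_one, map_mul, emb_C, emb_X]
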